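/- arXiv:2308.12190 — 7 statements merged into one kernel-verified Lean document; each statement's English description precedes it below -/
import Mathlib

section
/- The unique realization of the degree sequence (3,3,3,3,3,1) contains an induced subgraph that is not a unigraph; hence the class of unigraphs is not hereditary. -/
open scoped Classical

/-- The degree sequence of a finite simple graph, as a multiset of vertex degrees. -/
noncomputable def degSeq {V : Type*} [Fintype V] (G : SimpleGraph V) : Multiset ℕ :=
  Finset.univ.val.map fun v => (G.neighborSet v).ncard

/-- A graph is a unigraph if every graph with the same degree sequence is isomorphic to it. -/
def IsUnigraph {V : Type} [Fintype V] (G : SimpleGraph V) : Prop :=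
  ∀ (W : Type) [Fintype W] (H : SimpleGraph W), degSeq G = degSeq H → Nonempty (G ≃g H)

/-! ### Auxiliary machinery -/

/-- The degree sequence equals the multiset of `degree`s. -/
lemma degSeq_eq_degrees {V : Type*} [Fintype V] (G : SimpleGraph V) [DecidableRel G.Adj] :
    degSeq G = Finset.univ.val.map fun v => G.degree v := by
  unfold degSeq
  congr 1
  funext v
  rw [Set.ncard_eq_toFinset_card' (G.neighborSet v)]
  simp [SimpleGraph.degree, SimpleGraph.neighborFinset]

/-- Isomorphic graphs have the same degree sequence. -/
lemma degSeq_iso {V W : Type*} [Fintype V] [Fintype W] {G : SimpleGraph V}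
    {H : SimpleGraph W} (e : G ≃g H) : degSeq G = degSeq H := by
  unfold degSeq
  have h1 : (Finset.univ.val.map fun w => (H.neighborSet w).ncard) =
      Finset.univ.val.map fun v => (H.neighborSet (e v)).ncard := by
    conv_lhs => rw [← Finset.map_univ_equiv e.toEquiv]
    rw [Finset.map_val, Multiset.map_map]
    rfl
  rw [h1]
  congr 1
  funext v
  rw [← Nat.card_coe_set_eq, ← Nat.card_coe_set_eq]
  exact Nat.card_congr (e.mapNeighborSet v)

/-- list of ordered pairs of `Fin 6`. -/
def plist : List (Fin 6 × Fin 6) :=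
  [(0,1),(0,2),(0,3),(0,4),(0,5),(1,2),(1,3),(1,4),(1,5),(2,3),(2,4),(2,5),(3,4),(3,5),(4,5)]

def ppair (i : Fin 15) : Fin 6 × Fin 6 := plist.getD i.val (0, 0)

def tri (a b : ℕ) : ℕ := a * (11 - a) / 2 + (b - a - 1)

def pidx (a b : Fin 6) : Fin 15 := ⟨tri a.val b.val % 15, Nat.mod_lt _ (by norm_num)⟩

def fadj (f : Fin 15 → Bool) (a b : Fin 6) : Bool :=
  if a < b then f (pidx a b) else if b < a then f (pidx b a) else false

lemma fadj_comm (f : Fin 15 → Bool) (a b : Fin 6) : fadj f a b = fadj f b a := by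
  unfold fadj
  rcases lt_trichotomy a b with h | h | h
  · simp [h, asymm h]
  · simp [h]
  · simp [h, asymm h]

/-- The graph on `Fin 6` determined by a boolean vector of edges. -/
def gF (f : Fin 15 → Bool) : SimpleGraph (Fin 6) where
  Adj a b := fadj f a b = true
  symm := by constructor; intro a b h; rwa [fadj_comm]
  loopless := by constructor; intro a; simp [fadj]

instance (f : Fin 15 → Bool) : DecidableRel (gF f).Adj := fun a b =>
  inferInstanceAs (Decidable (_ = true))

lemma ptri : ∀ a b : Fin 6, a < b → ppair (pidx a b) = (a, b) := by decide

/-- The edge bits of `G6`. -/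
def f06 : Fin 15 → Bool := fun i => [1,2,3,6,7,8,9,10].contains i.val

def G6 : SimpleGraph (Fin 6) := gF f06

instance : DecidableRel G6.Adj := fun a b => inferInstanceAs (Decidable (_ = true))

/-- The vertices of `Fin 6` as a literal list. -/
def verts : List (Fin 6) := [0, 1, 2, 3, 4, 5]

lemma verts_eq : verts = List.finRange 6 := by decide

lemma mem_verts : ∀ a : Fin 6, a ∈ verts := by decide

/-- Degree list computed with bare list operations. -/
def degL (f : Fin 15 → Bool) : List ℕ :=
  verts.map fun v => (verts.filter fun w => fadj f v w).length

/-- Insert `x` in all positions of a list. -/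
def inserts {α : Type} (x : α) : List α → List (List α)
  | [] => [[x]]
  | y :: ys => (x :: y :: ys) :: (inserts x ys).map (y :: ·)

def permsOf {α : Type} : List α → List (List α)
  | [] => [[]]
  | x :: xs => (permsOf xs).flatMap (inserts x)

/-- All permutations of `Fin 6`, as lists. -/
def perms : List (List (Fin 6)) := permsOf verts

def toFun15 (L : List Bool) : Fin 15 → Bool := fun i => L.getD i.val false

def lFun (l : List (Fin 6)) : Fin 6 → Fin 6 := fun i => l.getD i.val 0

def checkInj (l : List (Fin 6)) : Bool :=
  verts.all fun a => verts.all fun b =>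
    (a == b) || !(lFun l a == lFun l b)

def checkIso (f : Fin 15 → Bool) (l : List (Fin 6)) : Bool :=
  verts.all fun a => verts.all fun b =>
    fadj f a b == fadj f06 (lFun l a) (lFun l b)

def checkF (L : List Bool) : Bool :=
  !((degL (toFun15 L)).isPerm [3, 3, 3, 3, 3, 1]) ||
    perms.any fun l => checkInj l && checkIso (toFun15 L) l

def checkAll : List Bool → ℕ → Bool
  | acc, 0 => checkF acc
  | acc, k + 1 => checkAll (false :: acc) k && checkAll (true :: acc) k

set_option maxHeartbeats 40000000 in
set_option maxRecDepth 100000 in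
lemma chunk0 : checkAll [false, false, false, false] 11 = true := by decide +kernel

set_option maxHeartbeats 40000000 in
set_option maxRecDepth 100000 in
lemma chunk1 : checkAll [true, false, false, false] 11 = true := by decide +kernel

set_option maxHeartbeats 40000000 in
set_option maxRecDepth 100000 in
lemma chunk2 : checkAll [false, true, false, false] 11 = true := by decide +kernel

set_option maxHeartbeats 40000000 in
set_option maxRecDepth 100000 in
lemma chunk3 : checkAll [true, true, false, false] 11 = true := by decide +kernel

set_option maxHeartbeats 40000000 in
set_option maxRecDepth 100000 in
lemma chunk4 : checkAll [false, false, true, false] 11 = true := by decide +kernel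

set_option maxHeartbeats 40000000 in
set_option maxRecDepth 100000 in
lemma chunk5 : checkAll [true, false, true, false] 11 = true := by decide +kernel

set_option maxHeartbeats 40000000 in
set_option maxRecDepth 100000 in
lemma chunk6 : checkAll [false, true, true, false] 11 = true := by decide +kernel

set_option maxHeartbeats 40000000 in
set_option maxRecDepth 100000 in
lemma chunk7 : checkAll [true, true, true, false] 11 = true := by decide +kernel

set_option maxHeartbeats 40000000 in
set_option maxRecDepth 100000 in
lemma chunk8 : checkAll [false, false, false, true] 11 = true := by decide +kernel

set_option maxHeartbeats 40000000 in
set_option maxRecDepth 100000 in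
lemma chunk9 : checkAll [true, false, false, true] 11 = true := by decide +kernel

set_option maxHeartbeats 40000000 in
set_option maxRecDepth 100000 in
lemma chunk10 : checkAll [false, true, false, true] 11 = true := by decide +kernel

set_option maxHeartbeats 40000000 in
set_option maxRecDepth 100000 in
lemma chunk11 : checkAll [true, true, false, true] 11 = true := by decide +kernel

set_option maxHeartbeats 40000000 in
set_option maxRecDepth 100000 in
lemma chunk12 : checkAll [false, false, true, true] 11 = true := by decide +kernel

set_option maxHeartbeats 40000000 in
set_option maxRecDepth 100000 in
lemma chunk13 : checkAll [true, false, true, true] 11 = true := by decide +kernel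

set_option maxHeartbeats 40000000 in
set_option maxRecDepth 100000 in
lemma chunk14 : checkAll [false, true, true, true] 11 = true := by decide +kernel

set_option maxHeartbeats 40000000 in
set_option maxRecDepth 100000 in
lemma chunk15 : checkAll [true, true, true, true] 11 = true := by decide +kernel

lemma checkAll_true : checkAll [] 15 = true := by
  have h : checkAll [] 15 = ((((checkAll [false, false, false, false] 11 && checkAll [true, false, false, false] 11) && (checkAll [false, true, false, false] 11 && checkAll [true, true, false, false] 11)) && ((checkAll [false, false, true, false] 11 && checkAll [true, false, true, false] 11) && (checkAll [false, true, true, false] 11 && checkAll [true, true, true, false] 11))) && (((checkAll [false, false, false, true] 11 && checkAll [true, false, false, true] 11) && (checkAll [false, true, false, true] 11 && checkAll [true, true, false, true] 11)) && ((checkAll [false, false, true, true] 11 && checkAll [true, false, true, true] 11) && (checkAll [false, true, true, true] 11 && checkAll [true, true, true, true] 11)))) := rfl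
  rw [h, chunk0, chunk1, chunk2, chunk3, chunk4, chunk5, chunk6, chunk7, chunk8, chunk9, chunk10, chunk11, chunk12, chunk13, chunk14, chunk15]
  rfl


lemma checkAll_spec : ∀ (k : ℕ) (acc : List Bool), checkAll acc k = true →
    ∀ ext : List Bool, ext.length = k → checkF (ext ++ acc) = true := by
  intro k
  induction k with
  | zero =>
    intro acc h ext hl
    rw [List.length_eq_zero_iff.mp hl]
    simpa [checkAll] using h
  | succ k ih =>
    intro acc h ext hl
    rw [checkAll, Bool.and_eq_true] at h
    rcases List.eq_nil_or_concat ext with rfl | ⟨ext', b, rfl⟩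
    · simp at hl
    · have hlen : ext'.length = k := by simpa using hl
      have hre : ext'.concat b ++ acc = ext' ++ (b :: acc) := by simp
      rw [hre]
      cases b
      · exact ih (false :: acc) h.1 ext' hlen
      · exact ih (true :: acc) h.2 ext' hlen

lemma filter_length_eq {α : Type} (p : α → Bool) :
    ∀ l : List α, (l.filter p).length = (l.map fun w => (p w).toNat).sum := by
  intro l
  induction l with
  | nil => rfl
  | cons a l ih =>
    rw [List.filter_cons]
    cases h : p a <;> simp [h, ih, Nat.add_comm]

lemma degree_gF (f : Fin 15 → Bool) (v : Fin 6) :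
    (gF f).degree v = (verts.filter fun w => fadj f v w).length := by
  rw [verts_eq, SimpleGraph.degree, SimpleGraph.neighborFinset_eq_filter]
  have huniv : (Finset.univ : Finset (Fin 6)).val = ↑(List.finRange 6) :=
    congrArg Finset.val (Fin.univ_def 6)
  rw [Finset.card_def, Finset.filter_val, huniv]
  rw [Multiset.filter_coe]
  rw [Multiset.coe_card]
  congr 1
  apply List.filter_congr
  intro w _
  show decide (fadj f v w = true) = fadj f v w
  cases fadj f v w <;> simp

/-- Key uniqueness lemma. -/
lemma key : ∀ f : Fin 15 → Bool,
    (Finset.univ.val.map fun v => (gF f).degree v) = ({3, 3, 3, 3, 3, 1} : Multiset ℕ) →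
    ∃ σ : Equiv.Perm (Fin 6), ∀ a b, (gF f).Adj a b ↔ G6.Adj (σ a) (σ b) := by
  intro f hdeg
  set L : List Bool := [f 0, f 1, f 2, f 3, f 4, f 5, f 6, f 7, f 8, f 9, f 10, f 11,
    f 12, f 13, f 14] with hL
  have hmk : toFun15 L = f := by
    funext i
    fin_cases i <;> rfl
  have hcf : checkF L = true := by
    have := checkAll_spec 15 [] checkAll_true L (by rw [hL]; rfl)
    simpa using this
  have hlist : (Finset.univ.val.map fun v => (gF f).degree v) = ↑(degL f) := by
    rw [show (Finset.univ : Finset (Fin 6)).val = ↑(List.finRange 6) from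
      congrArg Finset.val (Fin.univ_def 6)]
    rw [Multiset.map_coe, Multiset.coe_eq_coe]
    apply List.Perm.of_eq
    simp only [degL, ← verts_eq]
    exact List.map_congr_left fun v _ => degree_gF f v
  have hperm : (degL (toFun15 L)).isPerm [3, 3, 3, 3, 3, 1] = true := by
    rw [hmk, List.isPerm_iff, ← Multiset.coe_eq_coe, ← hlist, hdeg]
    rfl
  rw [checkF, hperm, Bool.not_true, Bool.false_or, List.any_eq_true] at hcf
  obtain ⟨l, _, hch⟩ := hcf
  rw [Bool.and_eq_true] at hch
  have hinj : Function.Injective (lFun l) := by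
    intro a b hab
    by_contra hne
    have h1 := hch.1
    rw [checkInj, List.all_eq_true] at h1
    have h2 := h1 a (mem_verts a)
    rw [List.all_eq_true] at h2
    have h3 := h2 b (mem_verts b)
    rw [Bool.or_eq_true, beq_iff_eq, Bool.not_eq_true', beq_eq_false_iff_ne] at h3
    rcases h3 with h | h
    · exact hne h
    · exact h hab
  have hiso : ∀ a b : Fin 6, fadj f a b = fadj f06 (lFun l a) (lFun l b) := by
    intro a b
    have h1 := hch.2
    rw [checkIso, List.all_eq_true] at h1
    have h2 := h1 a (mem_verts a)
    rw [List.all_eq_true] at h2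
    have h3 := h2 b (mem_verts b)
    rw [beq_iff_eq, hmk] at h3
    exact h3
  have hbij : Function.Bijective (lFun l) := (Finite.injective_iff_bijective).mp hinj
  refine ⟨Equiv.ofBijective _ hbij, fun a b => ?_⟩
  show fadj f a b = true ↔ fadj f06 (lFun l a) (lFun l b) = true
  rw [hiso a b]

/-- Transport of a graph along an equivalence of vertex types. -/
def transp {W : Type} (e : W ≃ Fin 6) (H : SimpleGraph W) : SimpleGraph (Fin 6) where
  Adj a b := H.Adj (e.symm a) (e.symm b)
  symm := ⟨fun _ _ h => h.symm⟩
  loopless := ⟨fun _ h => H.loopless.irrefl _ h⟩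

def transpIso {W : Type} (e : W ≃ Fin 6) (H : SimpleGraph W) : H ≃g transp e H where
  toEquiv := e
  map_rel_iff' := by intro a b; simp [transp]

/-- The tadpole graph: triangle 0-1-2 with tail 2-3-4. -/
def Htad : SimpleGraph (Fin 5) where
  Adj a b := [(0,1),(1,0),(0,2),(2,0),(1,2),(2,1),(2,3),(3,2),(3,4),(4,3)].contains
    (a.val, b.val) = true
  symm := by constructor; intro a b; revert a b; decide
  loopless := by constructor; intro a; revert a; decide

instance : DecidableRel Htad.Adj := fun a b => inferInstanceAs (Decidable (_ = true))

def sfin : Finset (Fin 6) := {1, 2, 3, 4, 5}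

/-- The induced subgraph of `G6` on the vertices `{1,2,3,4,5}`. -/
def Ig : SimpleGraph (↑sfin : Set (Fin 6)) := G6.induce (↑sfin : Set (Fin 6))

instance : DecidableRel Ig.Adj := fun _ _ => inferInstanceAs (Decidable (G6.Adj _ _))

lemma hdI : (Finset.univ.val.map fun v => Ig.degree v)
    = Finset.univ.val.map fun v => Htad.degree v := by decide

lemma hfree : ∀ a b c : (↑sfin : Set (Fin 6)), ¬ (Ig.Adj a b ∧ Ig.Adj b c ∧ Ig.Adj a c) := by
  decide

/-- There is a graph `G` with degree sequence `(3,3,3,3,3,1)` which is the unique realization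
of that degree sequence, yet `G` contains an induced subgraph that is not a unigraph; hence
the class of unigraphs is not hereditary. -/
theorem stmt3 :
    ∃ G : SimpleGraph (Fin 6),
      degSeq G = ({3, 3, 3, 3, 3, 1} : Multiset ℕ) ∧
      (∀ (W : Type) [Fintype W] (H : SimpleGraph W),
        degSeq H = ({3, 3, 3, 3, 3, 1} : Multiset ℕ) → Nonempty (H ≃g G)) ∧
      ∃ s : Finset (Fin 6), ¬ IsUnigraph (G.induce (↑s : Set (Fin 6))) := by
  refine ⟨G6, ?_, ?_, ?_⟩
  · rw [degSeq_eq_degrees]; decide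
  · intro W _ H hdeg
    have hcard : Fintype.card W = 6 := by
      have h1 : Multiset.card (degSeq H) = Fintype.card W := by
        simp [degSeq]
      have h2 : Multiset.card (degSeq H) = 6 := by rw [hdeg]; rfl
      omega
    let e : W ≃ Fin 6 := Fintype.equivFinOfCardEq hcard
    set T : SimpleGraph (Fin 6) := transp e H with hT
    have isoHT : H ≃g T := transpIso e H
    set f : Fin 15 → Bool := fun i => decide (T.Adj (ppair i).1 (ppair i).2) with hf
    have hTf : T = gF f := by
      ext a b
      show T.Adj a b ↔ fadj f a b = true
      rcases lt_trichotomy a b with h | h | h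
      · rw [fadj, if_pos h, hf]
        simp only [ptri a b h]
        simp
      · subst h
        simp [fadj, T.loopless.irrefl a]
      · rw [fadj, if_neg (asymm h), if_pos h, hf]
        simp only [ptri b a h]
        simp [T.adj_comm]
    have hdegf : (Finset.univ.val.map fun v => (gF f).degree v)
        = ({3, 3, 3, 3, 3, 1} : Multiset ℕ) := by
      rw [← degSeq_eq_degrees, ← hTf, ← degSeq_iso isoHT, hdeg]
    obtain ⟨σ, hσ⟩ := key f hdegf
    have iso2 : gF f ≃g G6 := ⟨σ, by intro a b; exact (hσ a b).symm⟩
    exact ⟨(hTf ▸ isoHT).trans iso2⟩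
  · refine ⟨sfin, ?_⟩
    intro hU
    have hd : degSeq Ig = degSeq Htad := by
      rw [degSeq_eq_degrees, degSeq_eq_degrees]; exact hdI
    obtain ⟨φ⟩ := hU (Fin 5) Htad hd
    -- Htad has a triangle, Ig does not.
    have htri : Htad.Adj 0 1 ∧ Htad.Adj 1 2 ∧ Htad.Adj 0 2 := by decide
    have e := φ.symm
    exact hfree (e 0) (e 1) (e 2)
      ⟨e.map_rel_iff'.mpr htri.1, e.map_rel_iff'.mpr htri.2.1, e.map_rel_iff'.mpr htri.2.2⟩
end

section
/- Tyshkevich composition is associative: for split graphs G₁ with KS-partition K₁ ∪ S₁ and G₂ with KS-partition K₂ ∪ S₂, and any graph H, the graphs (G₁ ∘ G₂) ∘ H and G₁ ∘ (G₂ ∘ H) are isomorphic (indeed equal on the common vertex set), where G₁ ∘ G₂ is given the KS-partition (K₁ ∪ K₂) ∪ (S₁ ∪ S₂). -/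
/-- A set of vertices is independent if no two of its vertices are adjacent. -/
def IsIndep {V : Type} (G : SimpleGraph V) (S : Set V) : Prop :=
  S.Pairwise fun a b => ¬ G.Adj a b

/-- `K ∪ S` is a KS-partition of `G`: the vertex set is partitioned into a clique `K`
and an independent set `S`. -/
def IsKSPart {V : Type} (G : SimpleGraph V) (K S : Set V) : Prop :=
  (∀ v, v ∈ K ∨ v ∈ S) ∧ (∀ v, ¬(v ∈ K ∧ v ∈ S)) ∧ G.IsClique K ∧ IsIndep G S

/-- A split graph: the vertices can be partitioned into a clique and an independent set. -/
def IsSplit {V : Type} (G : SimpleGraph V) : Prop :=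
  ∃ K S : Set V, IsKSPart G K S

/-- The Tyshkevich composition of a split graph `G1` (with clique part `K`) with a graph `G0`:
disjoint union of `G1` and `G0` plus all edges between `K` and `G0`. -/
def tcomp {V1 V0 : Type} (G1 : SimpleGraph V1) (K : Set V1) (G0 : SimpleGraph V0) :
    SimpleGraph (V1 ⊕ V0) where
  Adj x y :=
    match x, y with
    | Sum.inl a, Sum.inl b => G1.Adj a b
    | Sum.inl a, Sum.inr _ => a ∈ K
    | Sum.inr _, Sum.inl b => b ∈ K
    | Sum.inr a, Sum.inr b => G0.Adj a b
  symm := by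
    constructor
    rintro (a | a) (b | b) h
    · exact G1.adj_symm h
    · exact h
    · exact h
    · exact G0.adj_symm h
  loopless := by
    constructor
    rintro (a | a) h
    · exact G1.irrefl h
    · exact G0.irrefl h

/-- Tyshkevich composition is associative: `(G₁ ∘ G₂) ∘ H ≃g G₁ ∘ (G₂ ∘ H)`, where
`G₁ ∘ G₂` carries the KS-partition `(K₁ ∪ K₂) ∪ (S₁ ∪ S₂)`. -/
theorem stmt6 {V1 V2 V0 : Type} (G1 : SimpleGraph V1) (K1 S1 : Set V1)
    (G2 : SimpleGraph V2) (K2 S2 : Set V2) (H : SimpleGraph V0)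
    (h1 : IsKSPart G1 K1 S1) (h2 : IsKSPart G2 K2 S2) :
    Nonempty
      ((tcomp (tcomp G1 K1 G2) {x : V1 ⊕ V2 | Sum.elim (· ∈ K1) (· ∈ K2) x} H) ≃g
        (tcomp G1 K1 (tcomp G2 K2 H))) := by
  refine ⟨⟨Equiv.sumAssoc V1 V2 V0, ?_⟩⟩
  rintro ((a|a)|a) ((b|b)|b) <;> simp [tcomp, Equiv.sumAssoc]
end

section
/- Let π and ρ be graphic sequences. Then π is Rao-contained in ρ (i.e., some realization of π is an induced subgraph of some realization of ρ) if and only if ρ can be obtained from π by a finite sequence of augmentation steps, where augmenting a graphic sequence σ by a nonnegative integer k means increasing k distinct terms of σ by 1 and inserting a new term equal to k. -/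
open scoped Classical

/-- A multiset of naturals is graphic if it is the degree sequence of some finite graph. -/
def Graphic (π : Multiset ℕ) : Prop :=
  ∃ (n : ℕ) (G : SimpleGraph (Fin n)), degSeq G = π

/-- Rao containment: some realization of `π` is an induced subgraph of some realization
of `ρ`. -/
def RaoLE (π ρ : Multiset ℕ) : Prop :=
  ∃ (n m : ℕ) (G : SimpleGraph (Fin n)) (H : SimpleGraph (Fin m)),
    degSeq G = π ∧ degSeq H = ρ ∧ Nonempty (G ↪g H)

/-- `σ'` is obtained from `σ` by augmenting by the term `k`: increase `k` distinct terms of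
`σ` by `1` (a submultiset `t` of size `k`) and insert a new term equal to `k`. -/
def Augment (σ σ' : Multiset ℕ) : Prop :=
  ∃ t : Multiset ℕ, t ≤ σ ∧ σ' = (σ - t) + t.map (· + 1) + {Multiset.card t}

noncomputable def vdeg {V : Type*} [Fintype V] (G : SimpleGraph V) (v : V) : ℕ :=
  (G.neighborSet v).ncard

lemma degSeq_def {V : Type*} [Fintype V] (G : SimpleGraph V) :
    degSeq G = Finset.univ.val.map (vdeg G) := rfl

lemma exists_le_map_eq {α β : Type*} {f : α → β} {t : Multiset β} :
    ∀ {u : Multiset α}, t ≤ u.map f → ∃ u', u' ≤ u ∧ u'.map f = t := by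
  induction t using Multiset.induction with
  | empty => exact fun h => ⟨0, Multiset.zero_le _, rfl⟩
  | cons a t ih =>
    intro u h
    have ha : a ∈ u.map f := Multiset.mem_of_le h (Multiset.mem_cons_self a t)
    obtain ⟨x, hx, rfl⟩ := Multiset.mem_map.mp ha
    have hu : u.map f = f x ::ₘ (u.erase x).map f := by
      rw [← Multiset.map_cons, Multiset.cons_erase hx]
    have ht : t ≤ (u.erase x).map f := by
      rw [hu] at h; exact (Multiset.cons_le_cons_iff (f x)).mp h
    obtain ⟨u', hu', rfl⟩ := ih ht
    refine ⟨x ::ₘ u', ?_, by simp⟩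
    calc x ::ₘ u' ≤ x ::ₘ u.erase x := Multiset.cons_le_cons x hu'
    _ = u := Multiset.cons_erase hx

lemma univ_val_succAbove {m : ℕ} (v : Fin (m + 1)) :
    (Finset.univ : Finset (Fin (m + 1))).val = v ::ₘ Finset.univ.val.map v.succAbove := by
  have hnm : v ∉ Finset.univ.map v.succAboveEmb := by
    simp only [Finset.mem_map, Fin.succAboveEmb_apply]
    rintro ⟨a, -, ha⟩
    exact Fin.succAbove_ne v a ha
  have h : (Finset.univ : Finset (Fin (m + 1))) = insert v (Finset.univ.map v.succAboveEmb) := by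
    ext x
    simp only [Finset.mem_univ, true_iff, Finset.mem_insert, Finset.mem_map,
      Fin.succAboveEmb_apply, true_and]
    rcases eq_or_ne x v with rfl | hx
    · exact Or.inl rfl
    · exact Or.inr (Fin.exists_succAbove_eq hx)
  rw [h, Finset.insert_val_of_notMem hnm, Finset.map_val]
  rfl

lemma nbhd_v {m : ℕ} (H : SimpleGraph (Fin (m + 1))) (v : Fin (m + 1)) :
    H.neighborSet v = v.succAbove '' {b | H.Adj v (v.succAbove b)} := by
  ext x
  constructor
  · intro hx
    have hx' : H.Adj v x := hx
    obtain ⟨b, rfl⟩ := Fin.exists_succAbove_eq hx'.ne'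
    exact ⟨b, hx', rfl⟩
  · rintro ⟨b, hb, rfl⟩
    exact hb

lemma nbhd_succAbove_aux {m : ℕ} (H : SimpleGraph (Fin (m + 1))) (v : Fin (m + 1))
    (b : Fin m) (x : Fin (m + 1)) : x ∈ H.neighborSet (v.succAbove b) ↔
      (∃ c, c ∈ (H.comap v.succAbove).neighborSet b ∧ v.succAbove c = x) ∨
        (x = v ∧ H.Adj v (v.succAbove b)) := by
  constructor
  · intro hx
    rcases eq_or_ne x v with rfl | hne
    · exact Or.inr ⟨rfl, hx.symm⟩
    · obtain ⟨c, rfl⟩ := Fin.exists_succAbove_eq hne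
      exact Or.inl ⟨c, hx, rfl⟩
  · rintro (⟨c, hc, rfl⟩ | ⟨rfl, h⟩)
    · exact hc
    · exact h.symm

lemma nbhd_succAbove_pos {m : ℕ} (H : SimpleGraph (Fin (m + 1))) (v : Fin (m + 1))
    (b : Fin m) (h : H.Adj v (v.succAbove b)) :
    H.neighborSet (v.succAbove b) =
      v.succAbove '' ((H.comap v.succAbove).neighborSet b) ∪ {v} := by
  ext x
  rw [nbhd_succAbove_aux H v b x]
  simp only [Set.mem_union, Set.mem_image, Set.mem_singleton_iff]
  constructor
  · rintro (⟨c, hc, rfl⟩ | ⟨rfl, -⟩)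
    · exact Or.inl ⟨c, hc, rfl⟩
    · exact Or.inr rfl
  · rintro (⟨c, hc, rfl⟩ | rfl)
    · exact Or.inl ⟨c, hc, rfl⟩
    · exact Or.inr ⟨rfl, h⟩

lemma nbhd_succAbove_neg {m : ℕ} (H : SimpleGraph (Fin (m + 1))) (v : Fin (m + 1))
    (b : Fin m) (h : ¬ H.Adj v (v.succAbove b)) :
    H.neighborSet (v.succAbove b) =
      v.succAbove '' ((H.comap v.succAbove).neighborSet b) := by
  ext x
  rw [nbhd_succAbove_aux H v b x]
  simp only [Set.mem_image]
  constructor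
  · rintro (⟨c, hc, rfl⟩ | ⟨rfl, hh⟩)
    · exact ⟨c, hc, rfl⟩
    · exact absurd hh h
  · rintro ⟨c, hc, rfl⟩
    exact Or.inl ⟨c, hc, rfl⟩

lemma vdeg_v {m : ℕ} (H : SimpleGraph (Fin (m + 1))) (v : Fin (m + 1))
    (s : Finset (Fin m)) (hs : ∀ b, b ∈ s ↔ H.Adj v (v.succAbove b)) :
    vdeg H v = s.card := by
  have hset : {b | H.Adj v (v.succAbove b)} = (s : Set (Fin m)) := by
    ext b; simp [hs]
  rw [vdeg, nbhd_v, hset, Set.ncard_image_of_injective _ Fin.succAbove_right_injective,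
    Set.ncard_coe_finset]

lemma vdeg_succAbove {m : ℕ} (H : SimpleGraph (Fin (m + 1))) (v : Fin (m + 1))
    (s : Finset (Fin m)) (hs : ∀ b, b ∈ s ↔ H.Adj v (v.succAbove b)) (b : Fin m) :
    vdeg H (v.succAbove b) = vdeg (H.comap v.succAbove) b + (if b ∈ s then 1 else 0) := by
  by_cases h : b ∈ s
  · have hdisj : Disjoint (v.succAbove '' ((H.comap v.succAbove).neighborSet b))
        ({v} : Set (Fin (m + 1))) := by
      rw [Set.disjoint_singleton_right]
      rintro ⟨c, -, hc⟩
      exact Fin.succAbove_ne v c hc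
    rw [if_pos h, vdeg, nbhd_succAbove_pos H v b ((hs b).mp h),
      Set.ncard_union_eq hdisj (Set.toFinite _) (Set.toFinite _),
      Set.ncard_image_of_injective _ Fin.succAbove_right_injective, Set.ncard_singleton]
    rfl
  · rw [if_neg h, add_zero, vdeg, nbhd_succAbove_neg H v b (fun hh => h ((hs b).mpr hh)),
      Set.ncard_image_of_injective _ Fin.succAbove_right_injective]
    rfl

lemma degSeq_succ {m : ℕ} (H : SimpleGraph (Fin (m + 1))) (v : Fin (m + 1))
    (s : Finset (Fin m)) (hs : ∀ b, b ∈ s ↔ H.Adj v (v.succAbove b)) :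
    s.val.map (vdeg (H.comap v.succAbove)) ≤ degSeq (H.comap v.succAbove) ∧
      degSeq H = (degSeq (H.comap v.succAbove) - s.val.map (vdeg (H.comap v.succAbove)))
        + (s.val.map (vdeg (H.comap v.succAbove))).map (· + 1)
        + {Multiset.card (s.val.map (vdeg (H.comap v.succAbove)))} := by
  set H₀ := H.comap v.succAbove with hH₀
  set d₀ := vdeg H₀ with hd₀
  set t := s.val.map d₀ with htdef
  have h1 : Multiset.filter (· ∈ s) Finset.univ.val = s.val := by
    rw [← Finset.filter_val, Finset.filter_univ_mem]
  have hsplit : degSeq H₀ = t + (Multiset.filter (· ∉ s) Finset.univ.val).map d₀ := by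
    rw [degSeq_def, ← hd₀]
    conv_lhs => rw [← Multiset.filter_add_not (· ∈ s) Finset.univ.val]
    rw [Multiset.map_add, h1]
  have hle : t ≤ degSeq H₀ := hsplit ▸ Multiset.le_add_right _ _
  refine ⟨hle, ?_⟩
  have hsub : degSeq H₀ - t = (Multiset.filter (· ∉ s) Finset.univ.val).map d₀ := by
    rw [hsplit, add_tsub_cancel_left]
  have hdeg : degSeq H = vdeg H v ::ₘ Finset.univ.val.map (fun b => vdeg H (v.succAbove b)) := by
    rw [degSeq_def, univ_val_succAbove v, Multiset.map_cons, Multiset.map_map]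
    rfl
  rw [hdeg, hsub]
  have hmap : Finset.univ.val.map (fun b => vdeg H (v.succAbove b)) =
      (Multiset.filter (· ∉ s) Finset.univ.val).map d₀ + t.map (· + 1) := by
    conv_lhs => rw [← Multiset.filter_add_not (· ∈ s) Finset.univ.val]
    rw [Multiset.map_add, h1, add_comm]
    congr 1
    · refine Multiset.map_congr rfl fun b hb => ?_
      rw [vdeg_succAbove H v s hs b, if_neg (Multiset.mem_filter.mp hb).2, add_zero]
    · rw [htdef, Multiset.map_map]
      refine Multiset.map_congr rfl fun b hb => ?_
      rw [vdeg_succAbove H v s hs b, if_pos (Finset.mem_def.mpr hb)]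
      rfl
  rw [hmap, vdeg_v H v s hs]
  have hcard : Multiset.card t = s.card := by rw [htdef, Multiset.card_map]; rfl
  rw [hcard]
  rw [← Multiset.singleton_add]
  abel

noncomputable def extG {m : ℕ} (H₀ : SimpleGraph (Fin m)) (v : Fin (m + 1))
    (s : Finset (Fin m)) : SimpleGraph (Fin (m + 1)) where
  Adj x y := (∃ a b, v.succAbove a = x ∧ v.succAbove b = y ∧ H₀.Adj a b)
    ∨ (x = v ∧ ∃ b ∈ s, v.succAbove b = y)
    ∨ (y = v ∧ ∃ a ∈ s, v.succAbove a = x)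
  symm := by
    constructor
    rintro x y (⟨a, b, ha, hb, hab⟩ | ⟨rfl, b, hb, hbv⟩ | ⟨rfl, a, ha, hav⟩)
    · exact Or.inl ⟨b, a, hb, ha, hab.symm⟩
    · exact Or.inr (Or.inr ⟨rfl, b, hb, hbv⟩)
    · exact Or.inr (Or.inl ⟨rfl, a, ha, hav⟩)
  loopless := by
    constructor
    rintro x (⟨a, b, ha, hb, hab⟩ | ⟨hxv, b, hb, hbv⟩ | ⟨hxv, a, ha, hav⟩)
    · rw [← hb] at ha
      exact H₀.loopless.irrefl b (Fin.succAbove_right_injective ha ▸ hab)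
    · exact Fin.succAbove_ne v b (hbv.trans hxv)
    · exact Fin.succAbove_ne v a (hav.trans hxv)

lemma extG_adj {m : ℕ} (H₀ : SimpleGraph (Fin m)) (v : Fin (m + 1)) (s : Finset (Fin m))
    (x y : Fin (m + 1)) : (extG H₀ v s).Adj x y ↔
      ((∃ a b, v.succAbove a = x ∧ v.succAbove b = y ∧ H₀.Adj a b)
        ∨ (x = v ∧ ∃ b ∈ s, v.succAbove b = y)
        ∨ (y = v ∧ ∃ a ∈ s, v.succAbove a = x)) := Iff.rfl

lemma extG_comap {m : ℕ} (H₀ : SimpleGraph (Fin m)) (v : Fin (m + 1)) (s : Finset (Fin m)) :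
    (extG H₀ v s).comap v.succAbove = H₀ := by
  ext a b
  rw [SimpleGraph.comap_adj, extG_adj]
  constructor
  · rintro (⟨a', b', ha, hb, hab⟩ | ⟨h, -⟩ | ⟨h, -⟩)
    · rwa [Fin.succAbove_right_injective ha, Fin.succAbove_right_injective hb] at hab
    · exact absurd h (Fin.succAbove_ne v a)
    · exact absurd h (Fin.succAbove_ne v b)
  · exact fun h => Or.inl ⟨a, b, rfl, rfl, h⟩

lemma extG_adj_v {m : ℕ} (H₀ : SimpleGraph (Fin m)) (v : Fin (m + 1)) (s : Finset (Fin m))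
    (b : Fin m) : (extG H₀ v s).Adj v (v.succAbove b) ↔ b ∈ s := by
  rw [extG_adj]
  constructor
  · rintro (⟨a', b', ha, -, -⟩ | ⟨-, b', hb', hbv⟩ | ⟨h, -⟩)
    · exact absurd ha.symm (Fin.ne_succAbove v a')
    · rwa [← Fin.succAbove_right_injective hbv]
    · exact absurd h.symm (Fin.ne_succAbove v b)
  · exact fun h => Or.inr (Or.inl ⟨rfl, b, h, rfl⟩)

noncomputable def extG_emb {m : ℕ} (H₀ : SimpleGraph (Fin m)) (v : Fin (m + 1))
    (s : Finset (Fin m)) : H₀ ↪g extG H₀ v s where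
  toFun := v.succAbove
  inj' := Fin.succAbove_right_injective
  map_rel_iff' := by
    intro a b
    have := extG_comap H₀ v s
    constructor
    · intro h
      rw [← this]
      exact h
    · intro h
      rw [← this] at h
      exact h

lemma raole_chain : ∀ (m n : ℕ) (G : SimpleGraph (Fin n)) (H : SimpleGraph (Fin m)),
    (G ↪g H) → Relation.ReflTransGen Augment (degSeq G) (degSeq H) := by
  intro m
  induction m with
  | zero =>
    intro n G H f
    cases n with
    | zero =>
      have h1 : degSeq G = 0 := by simp [degSeq]
      have h2 : degSeq H = 0 := by simp [degSeq]
      rw [h1, h2]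
    | succ n => exact (f 0).elim0
  | succ m ih =>
    intro n G H f
    by_cases hsurj : Function.Surjective f
    · have hbij : Function.Bijective f := ⟨f.injective, hsurj⟩
      let e : G ≃g H := { Equiv.ofBijective f hbij with map_rel_iff' := f.map_rel_iff }
      rw [degSeq_iso e]
    · simp only [Function.Surjective, not_forall, not_exists] at hsurj
      obtain ⟨v, hfv⟩ := hsurj
      set H₀ := H.comap v.succAbove with hH₀
      choose g hg using fun a => Fin.exists_succAbove_eq (hfv a)
      have gemb : G ↪g H₀ := by
        refine ⟨⟨g, fun a b hab => f.injective ?_⟩, ?_⟩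
        · rw [← hg a, ← hg b, hab]
        · intro a b
          show H.Adj (v.succAbove (g a)) (v.succAbove (g b)) ↔ G.Adj a b
          rw [hg a, hg b]
          exact f.map_adj_iff
      have step := degSeq_succ H v (Finset.univ.filter fun b => H.Adj v (v.succAbove b))
        (fun b => by simp)
      exact (ih n G H₀ gemb).tail ⟨_, step.1, step.2⟩

lemma raole_of_augment {π σ ρ : Multiset ℕ} (h : RaoLE π σ) (ha : Augment σ ρ) :
    RaoLE π ρ := by
  obtain ⟨n, m, G, H, hG, hH, ⟨f⟩⟩ := h
  obtain ⟨t, ht, rfl⟩ := ha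
  subst hH
  have ht' : t ≤ Finset.univ.val.map (vdeg H) := by rw [← degSeq_def]; exact ht
  obtain ⟨u, hu, hut⟩ := exists_le_map_eq ht' 
  have hnodup : u.Nodup := Multiset.nodup_of_le hu Finset.univ.nodup
  set s : Finset (Fin m) := ⟨u, hnodup⟩ with hsdef
  have hsval : s.val.map (vdeg H) = t := hut
  set v := Fin.last m with hvdef
  set H' := extG H v s with hHdef
  have hc : H'.comap v.succAbove = H := extG_comap H v s
  have key := degSeq_succ H' v s (fun b => (extG_adj_v H v s b).symm)
  rw [hc, hsval] at key
  refine ⟨n, m + 1, G, H', hG, key.2, ⟨(extG_emb H v s).comp f⟩⟩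

/-- `π ⪯ ρ` in the Rao order iff `ρ` is obtained from `π` by a finite sequence of
augmentation steps. -/
theorem stmt11 (π ρ : Multiset ℕ) (hπ : Graphic π) (hρ : Graphic ρ) :
    RaoLE π ρ ↔ Relation.ReflTransGen Augment π ρ := by
  constructor
  · rintro ⟨n, m, G, H, hG, hH, ⟨f⟩⟩
    rw [← hG, ← hH]
    exact raole_chain m n G H f
  · intro h
    clear hρ
    induction h with
    | refl =>
      obtain ⟨n, G, hG⟩ := hπ
      exact ⟨n, n, G, G, hG, hG, ⟨SimpleGraph.Embedding.refl⟩⟩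
    | tail _ ha ih => exact raole_of_augment ih ha
end

section
/- The Rao relation on graphic sequences is transitive: if π ⪯ ρ and ρ ⪯ τ, then π ⪯ τ. -/
open scoped Classical

/-- From equality of multisets of values, extract a permutation matching the values. -/
lemma permOfMapEq {V : Type*} [Fintype V] (f g : V → ℕ)
    (h : Finset.univ.val.map f = Finset.univ.val.map g) :
    ∃ e : Equiv.Perm V, ∀ v, f v = g (e v) := by
  have hcard : ∀ n : ℕ, Fintype.card {v // f v = n} = Fintype.card {v // g v = n} := by
    intro n
    have hc := congrArg (Multiset.count n) h
    rw [Multiset.count_map, Multiset.count_map] at hc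
    rw [Fintype.card_subtype, Fintype.card_subtype]
    simpa [Finset.card, Finset.filter, eq_comm] using hc
  have e' : ∀ n : ℕ, {v // f v = n} ≃ {v // g v = n} :=
    fun n => Fintype.equivOfCardEq (hcard n)
  exact ⟨Equiv.ofFiberEquiv e', fun v => (Equiv.ofFiberEquiv_map e' v).symm⟩

/-- Degree sequences agree if all degrees agree pointwise. -/
lemma degSeq_congr {V : Type*} [Fintype V] {G G' : SimpleGraph V}
    (h : ∀ v, (G.neighborSet v).ncard = (G'.neighborSet v).ncard) :
    degSeq G = degSeq G' :=
  Multiset.map_congr rfl fun v _ => h v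

/-- Surgical replacement: if `H'` sits inside `K` as an induced subgraph and `H` has
pointwise the same degrees as `H'` up to a permutation, then there is a graph `K'`
with the same degree sequence as `K` containing `H` as an induced subgraph. -/
lemma exists_replace {m k : ℕ} (H H' : SimpleGraph (Fin m)) (K : SimpleGraph (Fin k))
    (f : H' ↪g K) (σ : Equiv.Perm (Fin m))
    (hd : ∀ v, (H.neighborSet v).ncard = (H'.neighborSet (σ v)).ncard) :
    ∃ K' : SimpleGraph (Fin k), degSeq K' = degSeq K ∧ Nonempty (H ↪g K') := by
  classical
  set g : Fin m ↪ Fin k :=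
    ⟨fun a => f (σ a), fun a b hab => σ.injective (f.injective hab)⟩ with hg
  have hgapp : ∀ a, g a = f (σ a) := fun a => rfl
  set A : SimpleGraph (Fin k) := H.map g with hA
  set B : SimpleGraph (Fin k) := H'.map f.toEmbedding with hB
  set K' : SimpleGraph (Fin k) := (K \ B) ⊔ A with hK'
  set S : Set (Fin k) := Set.range g with hS
  have hrange : Set.range (⇑f) = S := by
    ext x
    constructor
    · rintro ⟨c, rfl⟩; exact ⟨σ.symm c, by simp [hgapp]⟩
    · rintro ⟨a, rfl⟩; exact ⟨σ a, rfl⟩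
  -- key adjacency on image
  have hadjgg : ∀ a b, K'.Adj (g a) (g b) ↔ H.Adj a b := by
    intro a b
    have hAadj : A.Adj (g a) (g b) ↔ H.Adj a b := SimpleGraph.map_adj_apply
    have hBadj : B.Adj (g a) (g b) ↔ K.Adj (g a) (g b) := by
      have : B.Adj (f (σ a)) (f (σ b)) ↔ H'.Adj (σ a) (σ b) := SimpleGraph.map_adj_apply
      rw [hgapp, hgapp, this, ← f.map_rel_iff]
    simp only [hK', SimpleGraph.sup_adj, SimpleGraph.sdiff_adj, hAadj, hBadj]
    tauto
  -- outside the image nothing changes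
  have houtside : ∀ x y : Fin k, x ∉ S ∨ y ∉ S → (K'.Adj x y ↔ K.Adj x y) := by
    intro x y hxy
    have hAn : ¬ A.Adj x y := by
      rintro ⟨_, u, v, _, hu, hv⟩
      rcases hxy with hx | hy
      · exact hx ⟨u, hu⟩
      · exact hy ⟨v, hv⟩
    have hBn : ¬ B.Adj x y := by
      rintro ⟨_, u, v, _, hu, hv⟩
      rcases hxy with hx | hy
      · exact hx (hrange ▸ ⟨u, hu⟩)
      · exact hy (hrange ▸ ⟨v, hv⟩)
    simp only [hK', SimpleGraph.sup_adj, SimpleGraph.sdiff_adj]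
    tauto
  have hdeg : ∀ x, (K'.neighborSet x).ncard = (K.neighborSet x).ncard := by
    intro x
    by_cases hx : x ∈ S
    · obtain ⟨a, rfl⟩ := hx
      have split : ∀ N : Set (Fin k),
          N.ncard = (N ∩ S).ncard + (N \ S).ncard := by
        intro N
        conv_lhs => rw [← Set.inter_union_diff N S]
        exact Set.ncard_union_eq
          (Set.disjoint_of_subset_left Set.inter_subset_right Set.disjoint_sdiff_right)
          (Set.toFinite _) (Set.toFinite _)
      have h1 : K'.neighborSet (g a) ∩ S = ⇑g '' (H.neighborSet a) := by
        ext y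
        constructor
        · rintro ⟨hyadj, b, rfl⟩
          exact ⟨b, (hadjgg a b).mp hyadj, rfl⟩
        · rintro ⟨b, hb, rfl⟩
          exact ⟨(hadjgg a b).mpr hb, ⟨b, rfl⟩⟩
      have h2 : K.neighborSet (g a) ∩ S = ⇑f '' (H'.neighborSet (σ a)) := by
        ext y
        constructor
        · rintro ⟨hyadj, b, rfl⟩
          refine ⟨σ b, ?_, rfl⟩
          have := hyadj
          rw [hgapp, hgapp] at this
          exact f.map_rel_iff.mp this
        · rintro ⟨c, hc, rfl⟩
          refine ⟨?_, hrange ▸ ⟨c, rfl⟩⟩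
          show K.Adj (g a) (f c)
          rw [hgapp]
          exact f.map_rel_iff.mpr hc
      have h3 : K'.neighborSet (g a) \ S = K.neighborSet (g a) \ S := by
        ext y
        simp only [Set.mem_diff, SimpleGraph.mem_neighborSet]
        exact and_congr_left fun hy => houtside _ _ (Or.inr hy)
      rw [split (K'.neighborSet (g a)), split (K.neighborSet (g a)), h1, h2, h3,
        Set.ncard_image_of_injective _ g.injective,
        Set.ncard_image_of_injective _ f.injective, hd a]
    · have : K'.neighborSet x = K.neighborSet x := by
        ext y
        exact houtside x y (Or.inl hx)
      rw [this]
  refine ⟨K', degSeq_congr hdeg, ⟨⟨g, fun {a b} => hadjgg a b⟩⟩⟩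

/-- The Rao relation is transitive. -/
theorem stmt12 (π ρ τ : Multiset ℕ) (h1 : RaoLE π ρ) (h2 : RaoLE ρ τ) : RaoLE π τ := by
  obtain ⟨n, m, G, H, hG, hH, ⟨e1⟩⟩ := h1
  obtain ⟨m', k, H', K, hH', hK, ⟨e2⟩⟩ := h2
  have hmm : m = m' := by
    have c1 : (degSeq H).card = m := by simp [degSeq]
    have c2 : (degSeq H').card = m' := by simp [degSeq]
    rw [hH] at c1; rw [hH'] at c2; rw [← c1, ← c2]
  subst hmm
  have hmap : Finset.univ.val.map (fun v => (H.neighborSet v).ncard) =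
      Finset.univ.val.map (fun v => (H'.neighborSet v).ncard) := by
    have : degSeq H = degSeq H' := by rw [hH, hH']
    simpa [degSeq] using this
  obtain ⟨σ, hσ⟩ := permOfMapEq _ _ hmap
  obtain ⟨K', hK'deg, ⟨e3⟩⟩ := exists_replace H H' K e2 σ hσ
  exact ⟨n, k, G, K', hG, hK'deg.trans hK, ⟨e3.comp e1⟩⟩
end

section
/- (Kleitman–Wang) Given a non-increasing graphic sequence (d₁, …, dₙ) and an index k ∈ {1, …, n}, there exists a graph with vertices v₁, …, vₙ in which vᵢ has degree dᵢ for every i, and vₖ is adjacent exactly to the dₖ vertices vⱼ (j ≠ k) with smallest indices. -/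
open scoped Classical

open Finset

namespace KW14

variable {n : ℕ}

/-- rank of `j` among indices different from `k`. -/
def rk (k j : Fin n) : ℕ := if (j : ℕ) < (k : ℕ) then (j : ℕ) else (j : ℕ) - 1

lemma rk_lt_of_lt {k i j : Fin n} (hik : i ≠ k) (hjk : j ≠ k) (h : (i : ℕ) < j) :
    rk k i < rk k j := by
  have h1 : (i : ℕ) ≠ k := fun h => hik (Fin.ext h)
  have h2 : (j : ℕ) ≠ k := fun h => hjk (Fin.ext h)
  unfold rk; split <;> split <;> omega

lemma lt_of_rk_lt {k i j : Fin n} (hik : i ≠ k) (hjk : j ≠ k) (h : rk k i < rk k j) :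
    (i : ℕ) < j := by
  have h1 : (i : ℕ) ≠ k := fun h => hik (Fin.ext h)
  have h2 : (j : ℕ) ≠ k := fun h => hjk (Fin.ext h)
  unfold rk at h; revert h; split <;> split <;> omega

lemma rk_inj {k i j : Fin n} (hik : i ≠ k) (hjk : j ≠ k) (h : rk k i = rk k j) : i = j := by
  have h1 : (i : ℕ) ≠ k := fun h => hik (Fin.ext h)
  have h2 : (j : ℕ) ≠ k := fun h => hjk (Fin.ext h)
  have : (i : ℕ) = j := by unfold rk at h; revert h; split <;> split <;> omega
  exact Fin.ext this

lemma rk_add_two_le {k j : Fin n} (hjk : j ≠ k) : rk k j + 2 ≤ n := by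
  have h2 : (j : ℕ) ≠ k := fun h => hjk (Fin.ext h)
  have hj := j.isLt
  have hk := k.isLt
  unfold rk; split <;> omega

lemma rk_surj {k : Fin n} {r : ℕ} (h : r + 2 ≤ n) : ∃ i : Fin n, i ≠ k ∧ rk k i = r := by
  by_cases hr : r < (k : ℕ)
  · refine ⟨⟨r, by omega⟩, ?_, ?_⟩
    · intro he
      have : r = (k : ℕ) := congrArg Fin.val he
      omega
    · simp [rk, hr]
  · refine ⟨⟨r + 1, by omega⟩, ?_, ?_⟩
    · intro he
      have : r + 1 = (k : ℕ) := congrArg Fin.val he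
      omega
    · simp only [rk]
      have : ¬ (r + 1 < (k : ℕ)) := by omega
      simp [this]

/-- the 2-switch: remove edges `k-j`, `i-w`; add edges `k-i`, `j-w`. -/
def swapG (G : SimpleGraph (Fin n)) (k i j w : Fin n) : SimpleGraph (Fin n) where
  Adj a b := a ≠ b ∧
    ((G.Adj a b ∧ ¬ ((a = k ∧ b = j) ∨ (a = j ∧ b = k) ∨ (a = i ∧ b = w) ∨ (a = w ∧ b = i)))
      ∨ ((a = k ∧ b = i) ∨ (a = i ∧ b = k) ∨ (a = j ∧ b = w) ∨ (a = w ∧ b = j)))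
  symm := by
    constructor
    intro a b h
    obtain ⟨hne, h⟩ := h
    refine ⟨hne.symm, ?_⟩
    rcases h with ⟨h, hdel⟩ | hadd
    · exact Or.inl ⟨h.symm, by tauto⟩
    · exact Or.inr (by tauto)
  loopless := by constructor; intro a h; exact h.1 rfl

lemma card_insert_erase {α : Type*} [DecidableEq α] {s : Finset α} {x y : α}
    (hy : y ∈ s) (hx : x ∉ s) : (insert x (s.erase y)).card = s.card := by
  rw [Finset.card_insert_of_notMem (fun h => hx (Finset.mem_of_mem_erase h)),
    Finset.card_erase_of_mem hy]
  have : 0 < s.card := Finset.card_pos.2 ⟨y, hy⟩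
  omega

section swap

variable (G : SimpleGraph (Fin n)) {k i j w : Fin n}

lemma swap_nbr_k (hki : k ≠ i) (hkj : k ≠ j) (hkw : k ≠ w) :
    (swapG G k i j w).neighborFinset k = insert i ((G.neighborFinset k).erase j) := by
  ext b
  simp only [SimpleGraph.mem_neighborFinset, Finset.mem_insert, Finset.mem_erase]; simp only [swapG]
  constructor
  · rintro ⟨hne, ⟨hadj, hdel⟩ | hadd⟩
    · exact Or.inr ⟨by tauto, hadj⟩
    · rcases hadd with ⟨_, hb⟩ | ⟨h, _⟩ | ⟨h, _⟩ | ⟨h, _⟩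
      · exact Or.inl hb
      · exact absurd h hki
      · exact absurd h hkj
      · exact absurd h hkw
  · rintro (rfl | ⟨hbj, hadj⟩)
    · exact ⟨hki, Or.inr (by tauto)⟩
    · exact ⟨hadj.ne, Or.inl ⟨hadj, by tauto⟩⟩

lemma swap_nbr_i (hik : i ≠ k) (hij : i ≠ j) (hiw : i ≠ w) :
    (swapG G k i j w).neighborFinset i = insert k ((G.neighborFinset i).erase w) := by
  ext b
  simp only [SimpleGraph.mem_neighborFinset, Finset.mem_insert, Finset.mem_erase]; simp only [swapG]
  constructor
  · rintro ⟨hne, ⟨hadj, hdel⟩ | hadd⟩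
    · exact Or.inr ⟨by tauto, hadj⟩
    · rcases hadd with ⟨h, _⟩ | ⟨_, hb⟩ | ⟨h, _⟩ | ⟨h, _⟩
      · exact absurd h hik
      · exact Or.inl hb
      · exact absurd h hij
      · exact absurd h hiw
  · rintro (rfl | ⟨hbw, hadj⟩)
    · exact ⟨hik, Or.inr (by tauto)⟩
    · exact ⟨hadj.ne, Or.inl ⟨hadj, by tauto⟩⟩

lemma swap_nbr_j (hjk : j ≠ k) (hji : j ≠ i) (hjw : j ≠ w) :
    (swapG G k i j w).neighborFinset j = insert w ((G.neighborFinset j).erase k) := by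
  ext b
  simp only [SimpleGraph.mem_neighborFinset, Finset.mem_insert, Finset.mem_erase]; simp only [swapG]
  constructor
  · rintro ⟨hne, ⟨hadj, hdel⟩ | hadd⟩
    · exact Or.inr ⟨by tauto, hadj⟩
    · rcases hadd with ⟨h, _⟩ | ⟨h, _⟩ | ⟨_, hb⟩ | ⟨h, _⟩
      · exact absurd h hjk
      · exact absurd h hji
      · exact Or.inl hb
      · exact absurd h hjw
  · rintro (rfl | ⟨hbk, hadj⟩)
    · exact ⟨hjw, Or.inr (by tauto)⟩
    · exact ⟨hadj.ne, Or.inl ⟨hadj, by tauto⟩⟩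

lemma swap_nbr_w (hwk : w ≠ k) (hwi : w ≠ i) (hwj : w ≠ j) :
    (swapG G k i j w).neighborFinset w = insert j ((G.neighborFinset w).erase i) := by
  ext b
  simp only [SimpleGraph.mem_neighborFinset, Finset.mem_insert, Finset.mem_erase]; simp only [swapG]
  constructor
  · rintro ⟨hne, ⟨hadj, hdel⟩ | hadd⟩
    · exact Or.inr ⟨by tauto, hadj⟩
    · rcases hadd with ⟨h, _⟩ | ⟨h, _⟩ | ⟨h, _⟩ | ⟨_, hb⟩
      · exact absurd h hwk
      · exact absurd h hwi
      · exact absurd h hwj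
      · exact Or.inl hb
  · rintro (rfl | ⟨hbi, hadj⟩)
    · exact ⟨hwj.symm ∘ Eq.symm, Or.inr (by tauto)⟩
    · exact ⟨hadj.ne, Or.inl ⟨hadj, by tauto⟩⟩

lemma swap_nbr_other {v : Fin n} (hvk : v ≠ k) (hvi : v ≠ i) (hvj : v ≠ j) (hvw : v ≠ w) :
    (swapG G k i j w).neighborFinset v = G.neighborFinset v := by
  ext b
  simp only [SimpleGraph.mem_neighborFinset]; simp only [swapG]
  constructor
  · rintro ⟨hne, ⟨hadj, _⟩ | hadd⟩
    · exact hadj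
    · exact absurd hadd (by tauto)
  · intro hadj
    exact ⟨hadj.ne, Or.inl ⟨hadj, by tauto⟩⟩

end swap

end KW14

open KW14

/-- (Kleitman–Wang) Given a non-increasing graphic sequence `d : Fin n → ℕ` and an index
`k`, there is a realization in which vertex `i` has degree `d i` for every `i` and vertex
`k` is adjacent exactly to the first `d k` vertices other than `k` (i.e. those `j ≠ k`
whose rank among the indices different from `k` is below `d k`). -/
theorem stmt14 {n : ℕ} (d : Fin n → ℕ)
    (hmono : ∀ i j : Fin n, i ≤ j → d j ≤ d i)
    (hgraphic : ∃ G : SimpleGraph (Fin n), ∀ i, (G.neighborSet i).ncard = d i)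
    (k : Fin n) :
    ∃ G : SimpleGraph (Fin n), (∀ i, (G.neighborSet i).ncard = d i) ∧
      ∀ j : Fin n, j ≠ k →
        (G.Adj k j ↔ (if (j : ℕ) < (k : ℕ) then (j : ℕ) else (j : ℕ) - 1) < d k) := by
  classical
  have hncard : ∀ (G : SimpleGraph (Fin n)) (i : Fin n),
      (G.neighborSet i).ncard = (G.neighborFinset i).card := by
    intro G i
    rw [SimpleGraph.neighborFinset_def, Set.ncard_eq_toFinset_card']
  have hex : ∃ m, ∃ G : SimpleGraph (Fin n),
      (∀ i, (G.neighborFinset i).card = d i) ∧ (∑ b ∈ G.neighborFinset k, rk k b) = m := by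
    obtain ⟨G0, hG0⟩ := hgraphic
    exact ⟨_, G0, fun i => by rw [← hncard, hG0 i], rfl⟩
  obtain ⟨G, hG, hGm⟩ := Nat.find_spec hex
  have hmin : ∀ G' : SimpleGraph (Fin n), (∀ i, (G'.neighborFinset i).card = d i) →
      Nat.find hex ≤ ∑ b ∈ G'.neighborFinset k, rk k b :=
    fun G' h => Nat.find_le ⟨G', h, rfl⟩
  -- downward closure of the neighborhood of k in the minimal realization
  have hdc : ∀ i j : Fin n, i ≠ k → j ≠ k → (i : ℕ) < j → G.Adj k j → G.Adj k i := by
    intro i j hik hjk hij hadj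
    by_contra hki
    have hik' : (i : ℕ) ≤ j := le_of_lt hij
    have hdij : d j ≤ d i := hmono i j hik'
    have hinej : i ≠ j := fun h => by rw [h] at hij; omega
    have hkNi : k ∉ G.neighborFinset i := by
      simp only [SimpleGraph.mem_neighborFinset]
      exact fun h => hki h.symm
    have hkNj : k ∈ G.neighborFinset j := by
      simp only [SimpleGraph.mem_neighborFinset]; exact hadj.symm
    have hjpos : 1 ≤ d j := by
      rw [← hG j]; exact Finset.card_pos.2 ⟨k, hkNj⟩
    -- find w adjacent to i, not adjacent to j, distinct from k, j
    have hBA : (((G.neighborFinset j).erase i).erase k).card <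
        ((G.neighborFinset i).erase j).card := by
      by_cases hij2 : G.Adj i j
      · have hjNi : j ∈ G.neighborFinset i := by
          simpa [SimpleGraph.mem_neighborFinset] using hij2
        have hiNj : i ∈ G.neighborFinset j := by
          simpa [SimpleGraph.mem_neighborFinset] using hij2.symm
        have h1 : ((G.neighborFinset i).erase j).card = d i - 1 := by
          rw [Finset.card_erase_of_mem hjNi, hG i]
        have hkmem : k ∈ (G.neighborFinset j).erase i :=
          Finset.mem_erase.2 ⟨fun h => hik h.symm, hkNj⟩
        have h2 : (((G.neighborFinset j).erase i).erase k).card = d j - 1 - 1 := by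
          rw [Finset.card_erase_of_mem hkmem, Finset.card_erase_of_mem hiNj, hG j]
        have hj2 : 2 ≤ d j := by
          have hsub : ({i, k} : Finset (Fin n)) ⊆ G.neighborFinset j := by
            intro x hx
            rcases Finset.mem_insert.1 hx with rfl | hx
            · exact hiNj
            · rwa [Finset.mem_singleton.1 hx]
          have hc := Finset.card_le_card hsub
          rwa [Finset.card_insert_of_notMem (by simpa using hik), Finset.card_singleton,
            hG j] at hc
        omega
      · have hjNi : j ∉ G.neighborFinset i := by
          simpa [SimpleGraph.mem_neighborFinset] using hij2
        have hiNj : i ∉ G.neighborFinset j := by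
          simp only [SimpleGraph.mem_neighborFinset]
          exact fun h => hij2 h.symm
        have h1 : ((G.neighborFinset i).erase j).card = d i := by
          rw [Finset.erase_eq_of_notMem hjNi, hG i]
        have h2 : (((G.neighborFinset j).erase i).erase k).card = d j - 1 := by
          rw [Finset.erase_eq_of_notMem hiNj, Finset.card_erase_of_mem hkNj, hG j]
        omega
    obtain ⟨w, hwA, hwB⟩ := Finset.not_subset.1 (fun hsub => by
      exact absurd (Finset.card_le_card hsub) (not_le.2 hBA))
    obtain ⟨hwj, hwNi⟩ := Finset.mem_erase.1 hwA
    have hiw : G.Adj i w := (SimpleGraph.mem_neighborFinset ..).1 hwNi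
    have hwk : w ≠ k := fun h => hkNi (h ▸ hwNi)
    have hwi : w ≠ i := hiw.ne'
    have hjw : ¬ G.Adj j w := by
      intro h
      exact hwB (Finset.mem_erase.2 ⟨hwk, Finset.mem_erase.2 ⟨hwi,
        (SimpleGraph.mem_neighborFinset ..).2 h⟩⟩)
    have hki' : k ≠ i := fun h => hik h.symm
    have hkj' : k ≠ j := fun h => hjk h.symm
    have hkw : k ≠ w := fun h => hwk h.symm
    have hiw' : i ≠ w := fun h => hwi h.symm
    have hjw' : j ≠ w := fun h => hwj h.symm
    have hiNk : i ∉ G.neighborFinset k := by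
      simpa [SimpleGraph.mem_neighborFinset] using hki
    have hjNk : j ∈ G.neighborFinset k := by
      simpa [SimpleGraph.mem_neighborFinset] using hadj
    have hwNj : w ∉ G.neighborFinset j := by
      simpa [SimpleGraph.mem_neighborFinset] using hjw
    have hiNw : i ∈ G.neighborFinset w := by
      simpa [SimpleGraph.mem_neighborFinset] using hiw.symm
    have hjNw : j ∉ G.neighborFinset w := by
      simp only [SimpleGraph.mem_neighborFinset]
      exact fun h => hjw h.symm
    -- the swapped graph is a realization
    have hrealG' : ∀ v, ((swapG G k i j w).neighborFinset v).card = d v := by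
      intro v
      by_cases hv1 : v = k
      · rw [hv1, swap_nbr_k G hki' hkj' hkw, card_insert_erase hjNk hiNk, hG k]
      by_cases hv2 : v = i
      · rw [hv2, swap_nbr_i G hik hinej hiw', card_insert_erase hwNi hkNi, hG i]
      by_cases hv3 : v = j
      · rw [hv3, swap_nbr_j G hjk (Ne.symm hinej) hjw', card_insert_erase hkNj hwNj, hG j]
      by_cases hv4 : v = w
      · rw [hv4, swap_nbr_w G hwk hwi hwj, card_insert_erase hiNw hjNw, hG w]
      · rw [swap_nbr_other G hv1 hv2 hv3 hv4, hG v]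
    -- the measure strictly decreases
    have hmeasG' : (∑ b ∈ (swapG G k i j w).neighborFinset k, rk k b) <
        ∑ b ∈ G.neighborFinset k, rk k b := by
      rw [swap_nbr_k G hki' hkj' hkw]
      have hiNkj : i ∉ (G.neighborFinset k).erase j :=
        fun h => hiNk (Finset.mem_of_mem_erase h)
      rw [Finset.sum_insert hiNkj]
      have h2 : rk k j + ∑ b ∈ (G.neighborFinset k).erase j, rk k b =
          ∑ b ∈ G.neighborFinset k, rk k b :=
        Finset.add_sum_erase _ _ hjNk
      have h3 : rk k i < rk k j := rk_lt_of_lt hik hjk hij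
      omega
    have := hmin (swapG G k i j w) hrealG'
    omega
  -- derive the characterization of the neighborhood of k
  have hNne : ∀ b ∈ G.neighborFinset k, b ≠ k := by
    intro b hb
    exact ((SimpleGraph.mem_neighborFinset ..).1 hb).ne'
  have hAcard : ((G.neighborFinset k).image (rk k)).card = d k := by
    rw [Finset.card_image_of_injOn, hG k]
    intro a ha b hb hab
    exact rk_inj (hNne a ha) (hNne b hb) hab
  have hforward : ∀ j ∈ G.neighborFinset k, rk k j < d k := by
    intro j hj
    by_contra hge
    push_neg at hge
    have hjk := hNne j hj
    have hsub : Finset.range (rk k j + 1) ⊆ (G.neighborFinset k).image (rk k) := by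
      intro r hr
      rw [Finset.mem_range] at hr
      rcases Nat.lt_succ_iff_lt_or_eq.1 hr with hr | hr
      · have hrn : r + 2 ≤ n := by
          have := rk_add_two_le hjk
          omega
        obtain ⟨i, hik, hir⟩ := rk_surj (k := k) hrn
        have hij : (i : ℕ) < j := lt_of_rk_lt hik hjk (by omega)
        have hadj : G.Adj k i := hdc i j hik hjk hij ((SimpleGraph.mem_neighborFinset ..).1 hj)
        exact Finset.mem_image.2 ⟨i, (SimpleGraph.mem_neighborFinset ..).2 hadj, hir⟩
      · exact hr ▸ Finset.mem_image.2 ⟨j, hj, rfl⟩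
    have := Finset.card_le_card hsub
    rw [Finset.card_range, hAcard] at this
    omega
  have hAeq : (G.neighborFinset k).image (rk k) = Finset.range (d k) := by
    apply Finset.eq_of_subset_of_card_le
    · intro r hr
      obtain ⟨j, hj, rfl⟩ := Finset.mem_image.1 hr
      exact Finset.mem_range.2 (hforward j hj)
    · rw [Finset.card_range, hAcard]
  refine ⟨G, fun i => by rw [hncard]; exact hG i, ?_⟩
  intro j hjk
  show G.Adj k j ↔ rk k j < d k
  constructor
  · intro h
    exact hforward j ((SimpleGraph.mem_neighborFinset ..).2 h)
  · intro h
    have hmem : rk k j ∈ (G.neighborFinset k).image (rk k) := hAeq ▸ Finset.mem_range.2 h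
    obtain ⟨i, hi, hir⟩ := Finset.mem_image.1 hmem
    have hij : i = j := rk_inj (hNne i hi) hjk hir
    exact (SimpleGraph.mem_neighborFinset ..).1 (hij ▸ hi)
end

section
/- If π is a graphic sequence and π' is a KW-reduction of π at some index (remove the term dᵢ and decrement dᵢ of the remaining largest terms by 1), then π' is graphic and π' ⪯ π in the Rao order; i.e., some realization of π' is an induced subgraph of some realization of π. -/
open scoped Classical

lemma aux_insert_diff {α : Type*} (s : Set α) (hs : s.Finite) {c i : α} (hc : c ∈ s) (hi : i ∉ s) :
    (insert i (s \ {c})).ncard = s.ncard := by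
  rw [Set.ncard_insert_of_notMem (by simp [hi]) (hs.diff (t := {c})),
    Set.ncard_diff_singleton_of_mem hc]
  have : 0 < s.ncard := Set.ncard_pos hs |>.mpr ⟨c, hc⟩
  omega

/-- pairs to be removed in the 2-switch -/
def swP {V : Type*} (a b c i x y : V) : Prop :=
  (x = a ∧ y = c) ∨ (x = c ∧ y = a) ∨ (x = b ∧ y = i) ∨ (x = i ∧ y = b)

/-- pairs to be added in the 2-switch -/
def swQ {V : Type*} (a b c i x y : V) : Prop :=
  (x = a ∧ y = i) ∨ (x = i ∧ y = a) ∨ (x = b ∧ y = c) ∨ (x = c ∧ y = b)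

lemma swap_lemma {V : Type*} [Fintype V] (G : SimpleGraph V) (a b c i : V)
    (hab : a ≠ b) (hai : a ≠ i) (hbc : b ≠ c) (hci : c ≠ i)
    (Hac : G.Adj a c) (Hbi : G.Adj b i) (Hai : ¬ G.Adj a i) (Hbc : ¬ G.Adj b c) :
    ∃ G' : SimpleGraph V, (∀ v, (G'.neighborSet v).ncard = (G.neighborSet v).ncard) ∧
      G'.neighborSet i = insert a (G.neighborSet i \ {b}) := by
  have hac : a ≠ c := Hac.ne
  have hbi : b ≠ i := Hbi.ne
  have hPa : ∀ y, swP a b c i a y ↔ y = c := fun y => by simp [swP, hac, hab, hai]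
  have hPb : ∀ y, swP a b c i b y ↔ y = i := fun y => by simp [swP, Ne.symm hab, hbc, hbi]
  have hPc : ∀ y, swP a b c i c y ↔ y = a := fun y => by simp [swP, Ne.symm hac, Ne.symm hbc, hci]
  have hPi : ∀ y, swP a b c i i y ↔ y = b := fun y => by
    simp [swP, Ne.symm hai, Ne.symm hbi, Ne.symm hci]
  have hQi : ∀ y, swQ a b c i i y ↔ y = a := fun y => by
    simp [swQ, Ne.symm hai, Ne.symm hbi, Ne.symm hci]
  have hQa : ∀ y, swQ a b c i a y ↔ y = i := fun y => by simp [swQ, hac, hab, hai]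
  have hQb : ∀ y, swQ a b c i b y ↔ y = c := fun y => by simp [swQ, Ne.symm hab, hbc, hbi]
  have hQc : ∀ y, swQ a b c i c y ↔ y = b := fun y => by simp [swQ, Ne.symm hac, Ne.symm hbc, hci]
  refine ⟨⟨fun x y => (G.Adj x y ∧ ¬ swP a b c i x y) ∨ swQ a b c i x y, ?_, ?_⟩, ?_, ?_⟩
  · constructor; intro x y h
    rcases h with ⟨h1, h2⟩ | h
    · exact Or.inl ⟨h1.symm, fun hh => h2 (by unfold swP at hh ⊢; tauto)⟩
    · exact Or.inr (by unfold swQ at h ⊢; tauto)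
  · constructor; intro x h
    rcases h with ⟨h1, _⟩ | h
    · exact G.irrefl h1
    · unfold swQ at h
      rcases h with ⟨h1, h2⟩ | ⟨h1, h2⟩ | ⟨h1, h2⟩ | ⟨h1, h2⟩ <;> subst h1 <;> simp_all
  · -- degrees preserved
    have hset : ∀ v p q : V, (∀ y, swP a b c i v y ↔ y = p) → (∀ y, swQ a b c i v y ↔ y = q) →
        ({y | (G.Adj v y ∧ ¬ swP a b c i v y) ∨ swQ a b c i v y} : Set V)
          = insert q (G.neighborSet v \ {p}) := by
      intro v p q h1 h2
      ext y
      simp only [Set.mem_setOf_eq, h1 y, h2 y, Set.mem_insert_iff, Set.mem_diff,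
        Set.mem_singleton_iff, SimpleGraph.mem_neighborSet]
      tauto
    intro v
    show ({y | (G.Adj v y ∧ ¬ swP a b c i v y) ∨ swQ a b c i v y} : Set V).ncard = _
    by_cases hva : a = v
    · subst hva
      rw [hset a c i hPa hQa]
      exact aux_insert_diff _ (Set.toFinite _) Hac Hai
    by_cases hvb : b = v
    · subst hvb
      rw [hset b i c hPb hQb]
      exact aux_insert_diff _ (Set.toFinite _) Hbi Hbc
    by_cases hvc : c = v
    · subst hvc
      rw [hset c a b hPc hQc]
      exact aux_insert_diff _ (Set.toFinite _) Hac.symm (fun h => Hbc h.symm)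
    by_cases hvi : i = v
    · subst hvi
      rw [hset i b a hPi hQi]
      exact aux_insert_diff _ (Set.toFinite _) Hbi.symm (fun h => Hai h.symm)
    · congr 1
      ext y
      have h1 : ¬ swP a b c i v y := by unfold swP; tauto
      have h2 : ¬ swQ a b c i v y := by unfold swQ; tauto
      simp only [Set.mem_setOf_eq, SimpleGraph.mem_neighborSet, h1, h2]
      tauto
  · show ({y | (G.Adj i y ∧ ¬ swP a b c i i y) ∨ swQ a b c i i y} : Set V) = _
    ext y
    simp only [Set.mem_setOf_eq, hPi y, hQi y, Set.mem_insert_iff, Set.mem_diff,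
      Set.mem_singleton_iff, SimpleGraph.mem_neighborSet]
    tauto

lemma fin_succAbove_val {m : ℕ} (i : Fin (m+1)) (x : Fin m) :
    (i.succAbove x).val = if x.val < i.val then x.val else x.val + 1 := by
  rcases lt_or_ge x.val i.val with h | h
  · rw [Fin.succAbove_of_castSucc_lt _ _ (by simpa [Fin.lt_def]), if_pos h]; simp
  · rw [Fin.succAbove_of_le_castSucc _ _ (by simpa [Fin.le_def]), if_neg (Nat.not_lt.mpr h)]
    simp

/-- If `π'` is a KW-reduction of a non-increasing graphic sequence `d` at index `i`
(delete the term `d i` and decrement the `d i` largest remaining terms by 1, i.e. the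
remaining terms of smallest rank), then `π'` is graphic and `π' ⪯ π` in the Rao order. -/
theorem stmt15 {n : ℕ} (d : Fin n → ℕ)
    (hmono : ∀ i j : Fin n, i ≤ j → d j ≤ d i)
    (hgraphic : ∃ G : SimpleGraph (Fin n), ∀ v, (G.neighborSet v).ncard = d v)
    (i : Fin n) (π' : Multiset ℕ)
    (hπ' : π' = (Finset.univ.erase i).val.map (fun (j : Fin n) =>
      if (if j.val < i.val then j.val else j.val - 1) < d i then d j - 1 else d j)) :
    Graphic π' ∧ RaoLE π' (Finset.univ.val.map d) := by
  obtain ⟨m, rfl⟩ : ∃ m, n = m + 1 := ⟨n - 1, by have := i.pos; omega⟩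
  set σ : Fin m → Fin (m+1) := i.succAbove with hσ
  have hσinj : Function.Injective σ := Fin.succAbove_right_injective
  have hσrange : Set.range σ = {i}ᶜ := Fin.range_succAbove i
  have hσne : ∀ x, σ x ≠ i := fun x => Fin.succAbove_ne i x
  have hrank : ∀ x : Fin m,
      (if (σ x).val < i.val then (σ x).val else (σ x).val - 1) = x.val := by
    intro x
    have h := fin_succAbove_val i x
    rw [← hσ] at h
    have h3 : (σ x).val ≠ i.val := fun hh => hσne x (Fin.ext hh)
    split_ifs with h4 <;> split_ifs at h <;> omega
  set S : Set (Fin (m+1)) :=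
    {j | j ≠ i ∧ (if j.val < i.val then j.val else j.val - 1) < d i} with hS
  have hmemS : ∀ x : Fin m, σ x ∈ S ↔ x.val < d i := by
    intro x
    simp only [hS, Set.mem_setOf_eq, hrank x]
    exact ⟨fun h => h.2, fun h => ⟨hσne x, h⟩⟩
  obtain ⟨G₀, hG₀⟩ := hgraphic
  have hcompl : ({i}ᶜ : Set (Fin (m+1))).ncard = m := by
    rw [← hσrange, ← Set.image_univ, Set.ncard_image_of_injective _ hσinj,
      Set.ncard_univ, Nat.card_eq_fintype_card, Fintype.card_fin]
  have hdim : d i ≤ m := by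
    have h1 : G₀.neighborSet i ⊆ {i}ᶜ := by
      intro y hy
      simp only [Set.mem_compl_iff, Set.mem_singleton_iff]
      rintro rfl
      exact G₀.irrefl hy
    calc d i = (G₀.neighborSet i).ncard := (hG₀ i).symm
      _ ≤ ({i}ᶜ : Set (Fin (m+1))).ncard := Set.ncard_le_ncard h1 (Set.toFinite _)
      _ = m := hcompl
  have hScard : S.ncard = d i := by
    have himg : S = σ '' {x : Fin m | x.val < d i} := by
      ext j
      constructor
      · intro hj
        have hj1 : j ∈ Set.range σ := by
          rw [hσrange]
          simpa using hj.1
        obtain ⟨x, rfl⟩ := hj1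
        exact ⟨x, (hmemS x).mp hj, rfl⟩
      · rintro ⟨x, hx, rfl⟩
        exact (hmemS x).mpr hx
    have hset2 : {x : Fin m | x.val < d i} = (Fin.castLE hdim) '' Set.univ := by
      ext x
      simp only [Set.image_univ, Set.mem_range, Set.mem_setOf_eq]
      constructor
      · intro hx; exact ⟨⟨x.val, hx⟩, Fin.ext rfl⟩
      · rintro ⟨y, rfl⟩; exact y.isLt
    rw [himg, Set.ncard_image_of_injective _ hσinj, hset2,
      Set.ncard_image_of_injective _ (Fin.castLE_injective hdim),
      Set.ncard_univ, Nat.card_eq_fintype_card, Fintype.card_fin]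
  -- the key induction: we can realize the degrees with neighborhood of i exactly S
  have key : ∀ k : ℕ, ∀ G : SimpleGraph (Fin (m+1)), (∀ v, (G.neighborSet v).ncard = d v) →
      (S \ G.neighborSet i).ncard ≤ k →
      ∃ G' : SimpleGraph (Fin (m+1)),
        (∀ v, (G'.neighborSet v).ncard = d v) ∧ G'.neighborSet i = S := by
    intro k
    induction k with
    | zero =>
      intro G hG hle
      have hsub : S ⊆ G.neighborSet i := by
        rw [← Set.diff_eq_empty]
        exact (Set.ncard_eq_zero (Set.toFinite _)).mp (Nat.le_zero.mp hle)
      exact ⟨G, hG,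
        (Set.eq_of_subset_of_ncard_le hsub (by rw [hG i, hScard]) (Set.toFinite _)).symm⟩
    | succ k ih =>
      intro G hG hle
      by_cases hsub : S ⊆ G.neighborSet i
      · exact ⟨G, hG,
          (Set.eq_of_subset_of_ncard_le hsub (by rw [hG i, hScard]) (Set.toFinite _)).symm⟩
      obtain ⟨a, haS, haN⟩ := Set.not_subset.mp hsub
      have hNS : (G.neighborSet i \ S).Nonempty := by
        by_contra h
        have hsub2 : G.neighborSet i ⊆ S :=
          Set.diff_eq_empty.mp (Set.not_nonempty_iff_eq_empty.mp h)
        have heq : G.neighborSet i = S :=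
          Set.eq_of_subset_of_ncard_le hsub2 (by rw [hG i, hScard]) (Set.toFinite _)
        exact haN (by rw [heq]; exact haS)
      obtain ⟨b, hbN, hbS⟩ := hNS
      have hbineq : b ≠ i := fun h => G.irrefl (h ▸ hbN)
      have haiq : a ≠ i := haS.1
      have harank : (if a.val < i.val then a.val else a.val - 1) < d i := haS.2
      have hbrank : ¬ ((if b.val < i.val then b.val else b.val - 1) < d i) :=
        fun h => hbS ⟨hbineq, h⟩
      have hab : a ≠ b := fun h => haN (h ▸ hbN)
      have haval : a.val ≠ i.val := fun h => haiq (Fin.ext h)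
      have hbval : b.val ≠ i.val := fun h => hbineq (Fin.ext h)
      have hlt : a < b := by
        rw [Fin.lt_def]
        split_ifs at harank hbrank <;> omega
      have hdba : d b ≤ d a := hmono a b hlt.le
      have hAdjbi : G.Adj b i := hbN.symm
      have hAdjai : ¬ G.Adj a i := fun h => haN h.symm
      have hib_mem : i ∈ G.neighborSet b := (G.mem_neighborSet b i).mpr hAdjbi
      -- find the third vertex c
      have hc : ∃ c, G.Adj a c ∧ ¬ G.Adj b c ∧ c ≠ b := by
        by_contra h
        push_neg at h
        by_cases hba : G.Adj a b
        · have hsub3 : insert a (insert i (G.neighborSet a \ {b})) ⊆ G.neighborSet b := by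
            intro y hy
            rcases hy with rfl | rfl | ⟨hy1, hy2⟩
            · exact hba.symm
            · exact hib_mem
            · by_contra hy3
              exact hy2 (h y hy1 hy3)
          have hcard : (insert a (insert i (G.neighborSet a \ {b}))).ncard
              = (G.neighborSet a).ncard + 1 := by
            rw [Set.ncard_insert_of_notMem
              (by
                simp only [Set.mem_insert_iff, Set.mem_diff, Set.mem_singleton_iff]
                push_neg
                exact ⟨haiq, fun hmem => (G.irrefl ((G.mem_neighborSet a a).mp hmem)).elim⟩)
              ((Set.toFinite _))]
            rw [aux_insert_diff (G.neighborSet a) (Set.toFinite _)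
              ((G.mem_neighborSet a b).mpr hba)
              (fun hmem => hAdjai ((G.mem_neighborSet a i).mp hmem))]
          have hle2 : (G.neighborSet a).ncard + 1 ≤ (G.neighborSet b).ncard := by
            rw [← hcard]
            exact Set.ncard_le_ncard hsub3 (Set.toFinite _)
          rw [hG a, hG b] at hle2
          omega
        · have hsub3 : insert i (G.neighborSet a) ⊆ G.neighborSet b := by
            intro y hy
            rcases hy with rfl | hy1
            · exact hib_mem
            · by_contra hy3
              exact hba ((h y hy1 hy3) ▸ hy1)
          have hcard : (insert i (G.neighborSet a)).ncard = (G.neighborSet a).ncard + 1 := by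
            rw [Set.ncard_insert_of_notMem
              (fun hmem => hAdjai ((G.mem_neighborSet a i).mp hmem)) (Set.toFinite _)]
          have hle2 : (G.neighborSet a).ncard + 1 ≤ (G.neighborSet b).ncard := by
            rw [← hcard]
            exact Set.ncard_le_ncard hsub3 (Set.toFinite _)
          rw [hG a, hG b] at hle2
          omega
      obtain ⟨c, Hac, Hbc, hcb⟩ := hc
      have hci : c ≠ i := fun h => hAdjai (h ▸ Hac)
      obtain ⟨G₁, hdeg1, hNi1⟩ :=
        swap_lemma G a b c i hab haiq (Ne.symm hcb) hci Hac hAdjbi hAdjai Hbc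
      have hG₁ : ∀ v, (G₁.neighborSet v).ncard = d v := fun v => (hdeg1 v).trans (hG v)
      have hsetEq : S \ G₁.neighborSet i = (S \ G.neighborSet i) \ {a} := by
        rw [hNi1]
        ext y
        constructor
        · rintro ⟨hyS, hy⟩
          refine ⟨⟨hyS, fun hyN => hy ?_⟩, fun hya => hy ?_⟩
          · exact Set.mem_insert_iff.mpr
              (Or.inr ⟨hyN, fun hb => hbS (hb ▸ hyS)⟩)
          · rw [hya]; exact Set.mem_insert _ _
        · rintro ⟨⟨hyS, hyN⟩, hya⟩
          refine ⟨hyS, fun hy => ?_⟩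
          rcases Set.mem_insert_iff.mp hy with rfl | ⟨h1, -⟩
          · exact hya rfl
          · exact hyN h1
      have hmeasure : (S \ G₁.neighborSet i).ncard ≤ k := by
        rw [hsetEq, Set.ncard_diff_singleton_of_mem ((Set.mem_diff a).mpr ⟨haS, haN⟩)]
        omega
      exact ih G₁ hG₁ hmeasure
  obtain ⟨G', hdeg', hNi'⟩ := key (S \ G₀.neighborSet i).ncard G₀ hG₀ le_rfl
  -- delete vertex i
  set emb : Fin m ↪ Fin (m+1) := ⟨σ, hσinj⟩ with hemb
  set G'' : SimpleGraph (Fin m) := G'.comap emb with hG''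
  have hdeg'' : ∀ x : Fin m, (G''.neighborSet x).ncard =
      (if (if (σ x).val < i.val then (σ x).val else (σ x).val - 1) < d i
        then d (σ x) - 1 else d (σ x)) := by
    intro x
    have hNset : G''.neighborSet x = σ ⁻¹' (G'.neighborSet (σ x)) := rfl
    have h1 : (σ ⁻¹' (G'.neighborSet (σ x))).ncard = (G'.neighborSet (σ x) \ {i}).ncard := by
      rw [← Set.ncard_image_of_injective _ hσinj, Set.image_preimage_eq_inter_range,
        hσrange, ← Set.diff_eq]
    rw [hNset, h1, hrank x]
    by_cases hx : x.val < d i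
    · have hmem : σ x ∈ S := (hmemS x).mpr hx
      have hadj : i ∈ G'.neighborSet (σ x) := by
        have h2 : G'.Adj i (σ x) := by rw [← SimpleGraph.mem_neighborSet, hNi']; exact hmem
        exact h2.symm
      rw [if_pos hx, Set.ncard_diff_singleton_of_mem hadj, hdeg' (σ x)]
    · have hmem : σ x ∉ S := fun h => hx ((hmemS x).mp h)
      have hadj : i ∉ G'.neighborSet (σ x) := by
        intro h
        apply hmem
        rw [← hNi']
        exact (h : G'.Adj (σ x) i).symm
      rw [if_neg hx, Set.diff_singleton_eq_self hadj, hdeg' (σ x)]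
  have huniv : (Finset.univ.erase i) = Finset.univ.map emb := by
    ext j
    simp only [Finset.mem_erase, Finset.mem_univ, and_true, true_and, Finset.mem_map,
      Function.Embedding.coeFn_mk, hemb]
    constructor
    · intro hj
      have hj1 : j ∈ Set.range σ := by rw [hσrange]; simpa using hj
      obtain ⟨x, rfl⟩ := hj1
      first
      | exact ⟨x, rfl⟩
      | exact ⟨x, Finset.mem_univ x, rfl⟩
    · rintro ⟨x, -, rfl⟩
      exact hσne x
  have hπ'2 : π' = Finset.univ.val.map (fun x : Fin m =>
      if (if (σ x).val < i.val then (σ x).val else (σ x).val - 1) < d i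
        then d (σ x) - 1 else d (σ x)) := by
    rw [hπ', huniv, Finset.map_val, Multiset.map_map]
    rfl
  have hdegSeq'' : degSeq G'' = π' := by
    rw [hπ'2]
    exact Multiset.map_congr rfl (fun x _ => hdeg'' x)
  have hdegSeq' : degSeq G' = Finset.univ.val.map d :=
    Multiset.map_congr rfl (fun v _ => hdeg' v)
  exact ⟨⟨m, G'', hdegSeq''⟩,
    ⟨m, m + 1, G'', G', hdegSeq'', hdegSeq', ⟨SimpleGraph.Embedding.comap emb G'⟩⟩⟩
end

section
/- In a split graph G with a KS-partition in which the clique K and independent set S are both nonempty and G has no swing vertex (no vertex whose degree equals the clique number), every vertex of K has strictly larger degree than every vertex of S. -/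
/-- In a split graph with a KS-partition having both parts nonempty and no swing vertex
(no vertex lying in the clique of one KS-partition and the stable set of another),
every clique vertex has strictly larger degree than every stable-set vertex. -/
theorem stmt16 {V : Type} [Fintype V] (G : SimpleGraph V) (K S : Set V)
    (hKS : IsKSPart G K S) (hKne : K.Nonempty) (hSne : S.Nonempty)
    (hswing : ∀ K1 S1 K2 S2 : Set V, IsKSPart G K1 S1 → IsKSPart G K2 S2 →
      ∀ v, v ∈ K1 → v ∈ S2 → False) :
    ∀ a ∈ K, ∀ b ∈ S, (G.neighborSet b).ncard < (G.neighborSet a).ncard := by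
  obtain ⟨hcov, hdisj, hclq, hind⟩ := hKS
  have hKSpart : IsKSPart G K S := ⟨hcov, hdisj, hclq, hind⟩
  intro a ha b hb
  -- b misses some vertex of K
  have hk : ∃ k ∈ K, ¬ G.Adj b k := by
    by_contra h
    push_neg at h
    have hnew : IsKSPart G (K ∪ {b}) (S \ {b}) := by
      refine ⟨?_, ?_, ?_, ?_⟩
      · intro v
        rcases hcov v with hv | hv
        · exact Or.inl (Or.inl hv)
        · by_cases hvb : v = b
          · exact Or.inl (Or.inr hvb)
          · exact Or.inr ⟨hv, hvb⟩
      · rintro v ⟨hv1, hv2, hv3⟩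
        rcases hv1 with hv | hv
        · exact hdisj v ⟨hv, hv2⟩
        · exact hv3 hv
      · rintro x (hx | hx) y (hy | hy) hxy
        · exact hclq hx hy hxy
        · simp only [Set.mem_singleton_iff] at hy; subst hy
          exact (h x hx).symm
        · simp only [Set.mem_singleton_iff] at hx; subst hx
          exact h y hy
        · simp only [Set.mem_singleton_iff] at hx hy; exact absurd (hx.trans hy.symm) hxy
      · exact hind.mono Set.diff_subset
    exact hswing (K ∪ {b}) (S \ {b}) K S hnew hKSpart b (Or.inr rfl) hb
  obtain ⟨k, hkK, hbk⟩ := hk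
  -- a has a neighbor in S
  have hs : ∃ s ∈ S, G.Adj a s := by
    by_contra h
    push_neg at h
    have hnew : IsKSPart G (K \ {a}) (S ∪ {a}) := by
      refine ⟨?_, ?_, ?_, ?_⟩
      · intro v
        rcases hcov v with hv | hv
        · by_cases hva : v = a
          · exact Or.inr (Or.inr hva)
          · exact Or.inl ⟨hv, hva⟩
        · exact Or.inr (Or.inl hv)
      · rintro v ⟨⟨hv1, hv2⟩, hv3⟩
        rcases hv3 with hv | hv
        · exact hdisj v ⟨hv1, hv⟩
        · exact hv2 hv
      · exact hclq.subset Set.diff_subset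
      · rintro x (hx | hx) y (hy | hy) hxy
        · exact hind hx hy hxy
        · simp only [Set.mem_singleton_iff] at hy; subst hy
          exact fun hadj => h x hx hadj.symm
        · simp only [Set.mem_singleton_iff] at hx; subst hx
          exact h y hy
        · simp only [Set.mem_singleton_iff] at hx hy
          exact absurd (hx.trans hy.symm) hxy
    exact hswing K S (K \ {a}) (S ∪ {a}) hKSpart hnew a ha (Or.inr rfl)
  obtain ⟨s, hsS, has⟩ := hs
  have hbK : ∀ x, G.Adj b x → x ∈ K := by
    intro x hx
    rcases hcov x with h | h
    · exact h
    · exact absurd hx (hind hb h hx.ne)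
  have h1 : G.neighborSet b ⊆ K \ {k} := by
    intro x hx
    refine ⟨hbK x hx, ?_⟩
    rintro rfl
    exact hbk hx
  have h2 : insert s (K \ {a}) ⊆ G.neighborSet a := by
    rintro x (rfl | ⟨hxK, hxa⟩)
    · exact has
    · exact hclq ha hxK (fun h => hxa h.symm)
  have hsK : s ∉ K \ {a} := fun h => hdisj s ⟨h.1, hsS⟩
  have hKfin : K.Finite := Set.toFinite _
  calc (G.neighborSet b).ncard ≤ (K \ {k}).ncard := Set.ncard_le_ncard h1 (Set.toFinite _)
    _ < K.ncard := Set.ncard_diff_singleton_lt_of_mem hkK hKfin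
    _ = (K \ {a}).ncard + 1 := (Set.ncard_diff_singleton_add_one ha hKfin).symm
    _ = (insert s (K \ {a})).ncard := (Set.ncard_insert_of_notMem hsK (Set.toFinite _)).symm
    _ ≤ (G.neighborSet a).ncard := Set.ncard_le_ncard h2 (Set.toFinite _)
end
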